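/- Let a_i ∈ ℝ for i = 1, ..., n and let f_i be holomorphic and zero-free on {Re ζ > a_i}. If f(ζ_1 + ... + ζ_n) = ∏ f_i(ζ_i) for a holomorphic f, then for any i ≠ j and any ζ_i, ζ_j in the respective half-planes, f_i'(ζ_i)/f_i(ζ_i) = f_j'(ζ_j)/f_j(ζ_j); in particular each logarithmic derivative f_i'/f_i is a constant function independent of i. -/

import Mathlib

open Complex

private lemma key_19 (n : ℕ) (a : Fin n → ℝ) (f : ℂ → ℂ) (F : Fin n → ℂ → ℂ)
    (hF : ∀ i, DifferentiableOn ℂ (F i) {ζ : ℂ | a i < ζ.re})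
    (hFz : ∀ i, ∀ ζ : ℂ, a i < ζ.re → F i ζ ≠ 0)
    (hf : DifferentiableOn ℂ f {w : ℂ | (∑ i, a i) < w.re})
    (heq : ∀ ζ : Fin n → ℂ, (∀ i, a i < (ζ i).re) →
      f (∑ i, ζ i) = ∏ i, F i (ζ i))
    (ζ : Fin n → ℂ) (hζ : ∀ k, a k < (ζ k).re) (i : Fin n) :
    deriv (F i) (ζ i) / F i (ζ i) = deriv f (∑ k, ζ k) / f (∑ k, ζ k) := by
  set S := ∑ k, ζ k with hS
  have hopen : IsOpen {z : ℂ | a i < z.re} := isOpen_lt continuous_const continuous_re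
  have hopen' : IsOpen {w : ℂ | (∑ i, a i) < w.re} :=
    isOpen_lt continuous_const continuous_re
  have hSre : (∑ k, a k) < S.re := by
    rw [hS, Complex.re_sum]
    exact Finset.sum_lt_sum (fun k _ => (hζ k).le) ⟨i, Finset.mem_univ i, hζ i⟩
  set T := ∑ k ∈ Finset.univ.erase i, ζ k with hT
  have hST : S = ζ i + T := (Finset.add_sum_erase _ _ (Finset.mem_univ i)).symm
  set C := ∏ k ∈ Finset.univ.erase i, F k (ζ k) with hC
  have hCne : C ≠ 0 :=
    Finset.prod_ne_zero_iff.mpr fun k _ => hFz k _ (hζ k)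
  have hfS : f S = F i (ζ i) * C := by
    rw [hS, heq ζ hζ, ← Finset.mul_prod_erase _ _ (Finset.mem_univ i)]
  have funeq : ∀ᶠ z in nhds (ζ i), f (z + T) = F i z * C := by
    filter_upwards [hopen.mem_nhds (hζ i)] with z hz
    have hup : ∀ k, a k < ((Function.update ζ i z) k).re := by
      intro k
      by_cases hk : k = i
      · subst hk; simpa using hz
      · simpa [Function.update_of_ne hk] using hζ k
    have h := heq (Function.update ζ i z) hup
    rw [Finset.sum_update_of_mem (Finset.mem_univ i)] at h
    have hprod : ∏ k, F k (Function.update ζ i z k) = F i z * C := by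
      rw [← Finset.mul_prod_erase _ _ (Finset.mem_univ i), Function.update_self, hC]
      congr 1
      exact Finset.prod_congr rfl fun k hk => by
        rw [Function.update_of_ne (Finset.ne_of_mem_erase hk)]
    rw [hprod] at h
    rw [hT, Finset.erase_eq]
    exact h
  have hdF : HasDerivAt (F i) (deriv (F i) (ζ i)) (ζ i) :=
    ((hF i).differentiableAt (hopen.mem_nhds (hζ i))).hasDerivAt
  have hdf : HasDerivAt f (deriv f S) S :=
    (hf.differentiableAt (hopen'.mem_nhds hSre)).hasDerivAt
  have hcomp : HasDerivAt (fun z => f (z + T)) (deriv f S) (ζ i) := by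
    have hdf' : HasDerivAt f (deriv f S) (ζ i + T) := by rw [← hST]; exact hdf
    have h := HasDerivAt.comp (ζ i) hdf' ((hasDerivAt_id (ζ i)).add_const T)
    simpa [Function.comp_def] using h
  have h2 : HasDerivAt (fun z => F i z * C) (deriv f S) (ζ i) :=
    hcomp.congr_of_eventuallyEq (funeq.mono fun z h => h.symm)
  have h3 : HasDerivAt (fun z => F i z * C) (deriv (F i) (ζ i) * C) (ζ i) :=
    hdF.mul_const C
  have hder : deriv f S = deriv (F i) (ζ i) * C := h2.unique h3
  rw [hder, hfS, mul_div_mul_right _ _ hCne]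

theorem stmt_19 (n : ℕ) (hn : 2 ≤ n) (a : Fin n → ℝ) (f : ℂ → ℂ) (F : Fin n → ℂ → ℂ)
    (hF : ∀ i, DifferentiableOn ℂ (F i) {ζ : ℂ | a i < ζ.re})
    (hFz : ∀ i, ∀ ζ : ℂ, a i < ζ.re → F i ζ ≠ 0)
    (hf : DifferentiableOn ℂ f {w : ℂ | (∑ i, a i) < w.re})
    (heq : ∀ ζ : Fin n → ℂ, (∀ i, a i < (ζ i).re) →
      f (∑ i, ζ i) = ∏ i, F i (ζ i)) :
    (∀ i j : Fin n, ∀ ζi ζj : ℂ, a i < ζi.re → a j < ζj.re →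
        deriv (F i) ζi / F i ζi = deriv (F j) ζj / F j ζj) ∧
    ∃ lam : ℂ, ∀ i, ∀ ζ : ℂ, a i < ζ.re → deriv (F i) ζ / F i ζ = lam := by
  have hbase : ∀ k : Fin n, a k < ((a k : ℂ) + 1).re := by
    intro k; simp
  have hdist : ∀ i j : Fin n, i ≠ j → ∀ ζi ζj : ℂ, a i < ζi.re → a j < ζj.re →
      deriv (F i) ζi / F i ζi = deriv (F j) ζj / F j ζj := by
    intro i j hij ζi ζj hi hj
    set ζ : Fin n → ℂ :=
      Function.update (Function.update (fun k => (a k : ℂ) + 1) i ζi) j ζj with hζdef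
    have hζi : ζ i = ζi := by
      rw [hζdef, Function.update_of_ne hij, Function.update_self]
    have hζj : ζ j = ζj := by rw [hζdef, Function.update_self]
    have hζ : ∀ k, a k < (ζ k).re := by
      intro k
      by_cases hk : k = j
      · subst hk; rw [hζj]; exact hj
      · by_cases hk' : k = i
        · subst hk'; rw [hζi]; exact hi
        · rw [hζdef]
          simp only [Function.update_of_ne hk, Function.update_of_ne hk']
          exact hbase k
    have h1 := key_19 n a f F hF hFz hf heq ζ hζ i
    have h2 := key_19 n a f F hF hFz hf heq ζ hζ j
    rw [hζi] at h1; rw [hζj] at h2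
    rw [h1, h2]
  have hall : ∀ i j : Fin n, ∀ ζi ζj : ℂ, a i < ζi.re → a j < ζj.re →
      deriv (F i) ζi / F i ζi = deriv (F j) ζj / F j ζj := by
    intro i j ζi ζj hi hj
    by_cases hij : i = j
    · subst hij
      haveI : Nontrivial (Fin n) := Fin.nontrivial_iff_two_le.mpr hn
      obtain ⟨k, hk⟩ := exists_ne i
      have e1 := hdist i k (fun h => hk h.symm) ζi ((a k : ℂ) + 1) hi (hbase k)
      have e2 := hdist k i hk ((a k : ℂ) + 1) ζj (hbase k) hj
      rw [e1, e2]
    · exact hdist i j hij ζi ζj hi hj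
  refine ⟨hall, ?_⟩
  have h0 : (0 : ℕ) < n := by omega
  set i0 : Fin n := ⟨0, h0⟩
  exact ⟨deriv (F i0) ((a i0 : ℂ) + 1) / F i0 ((a i0 : ℂ) + 1),
    fun i ζ hζ => hall i i0 ζ ((a i0 : ℂ) + 1) hζ (hbase i0)⟩
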